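/- Fix α, r ∈ ℝ. For v > 0 with Δ(v) := (v/2 − α)² + 2vr > 0, let d₁(v) := ((v/2 − α) − √Δ(v))/v and d₂(v) := ((v/2 − α) + √Δ(v))/v. Then at every such v the function d₂ is differentiable with d₂′(v) = 2(α·d₂(v) − r)/(v²(d₂(v) − d₁(v))); moreover α·d₂(v) − r = (v/2)·d₂(v)(1 − d₂(v)), so that d₂′(v) has the same sign as d₂(v)(1 − d₂(v)): it is positive if 0 < d₂(v) < 1, zero if d₂(v) ∈ {0,1}, and negative if d₂(v) < 0 or d₂(v) > 1. In particular, for r > 0 one has d₂′(v) < 0 if α < r, d₂′(v) = 0 if α = r, and d₂′(v) > 0 if α > r. -/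

import Mathlib

/-- The smaller root of the characteristic polynomial `P(d) = (v/2)d² + (α − v/2)d − r`,
viewed as a function of the squared volatility `v`. -/
noncomputable def dOne (α r v : ℝ) : ℝ :=
  ((v / 2 - α) - Real.sqrt ((v / 2 - α) ^ 2 + 2 * v * r)) / v

/-- The larger root of the characteristic polynomial `P(d) = (v/2)d² + (α − v/2)d − r`,
viewed as a function of the squared volatility `v`. -/
noncomputable def dTwo (α r v : ℝ) : ℝ :=
  ((v / 2 - α) + Real.sqrt ((v / 2 - α) ^ 2 + 2 * v * r)) / v

set_option maxHeartbeats 1000000 in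
/-- Behaviour of the larger root `d₂(v)` as a function of the squared volatility `v`:
the derivative equals `2(α d₂ − r)/(v²(d₂ − d₁))`, one has
`α d₂ − r = (v/2) d₂ (1 − d₂)`, the sign of the derivative matches the sign of
`d₂(1 − d₂)`, and for `r > 0` the sign is determined by the position of `α` relative
to `r`. -/
theorem stmt_4 (α r v : ℝ) (hv : 0 < v)
    (hΔ : 0 < (v / 2 - α) ^ 2 + 2 * v * r) :
    HasDerivAt (dTwo α r)
      (2 * (α * dTwo α r v - r) / (v ^ 2 * (dTwo α r v - dOne α r v))) v ∧
    α * dTwo α r v - r = (v / 2) * dTwo α r v * (1 - dTwo α r v) ∧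
    ((0 < dTwo α r v ∧ dTwo α r v < 1) →
      0 < 2 * (α * dTwo α r v - r) / (v ^ 2 * (dTwo α r v - dOne α r v))) ∧
    ((dTwo α r v = 0 ∨ dTwo α r v = 1) →
      2 * (α * dTwo α r v - r) / (v ^ 2 * (dTwo α r v - dOne α r v)) = 0) ∧
    ((dTwo α r v < 0 ∨ 1 < dTwo α r v) →
      2 * (α * dTwo α r v - r) / (v ^ 2 * (dTwo α r v - dOne α r v)) < 0) ∧
    (0 < r →
      (α < r → 2 * (α * dTwo α r v - r) / (v ^ 2 * (dTwo α r v - dOne α r v)) < 0) ∧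
      (α = r → 2 * (α * dTwo α r v - r) / (v ^ 2 * (dTwo α r v - dOne α r v)) = 0) ∧
      (r < α → 0 < 2 * (α * dTwo α r v - r) / (v ^ 2 * (dTwo α r v - dOne α r v)))) := by
  have hv0 : v ≠ 0 := hv.ne'
  set s := Real.sqrt ((v / 2 - α) ^ 2 + 2 * v * r) with hs
  have hs2 : s ^ 2 = (v / 2 - α) ^ 2 + 2 * v * r := Real.sq_sqrt hΔ.le
  have hs0 : 0 < s := Real.sqrt_pos.mpr hΔ
  have hd2 : dTwo α r v = ((v / 2 - α) + s) / v := rfl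
  have hd1 : dOne α r v = ((v / 2 - α) - s) / v := rfl
  have hdiff : dTwo α r v - dOne α r v = 2 * s / v := by
    rw [hd1, hd2]; field_simp; ring
  have hden : 0 < v ^ 2 * (dTwo α r v - dOne α r v) := by
    rw [hdiff]; positivity
  -- the polynomial identity
  have hP : α * dTwo α r v - r = (v / 2) * dTwo α r v * (1 - dTwo α r v) := by
    rw [hd2]; field_simp; nlinarith [hs2]
  -- the derivative
  have hderiv : HasDerivAt (dTwo α r)
      (2 * (α * dTwo α r v - r) / (v ^ 2 * (dTwo α r v - dOne α r v))) v := by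
    have h1 : HasDerivAt (fun x : ℝ => x / 2 - α) (1 / 2) v := by
      simpa using ((hasDerivAt_id v).div_const 2).sub_const α
    have hq : HasDerivAt (fun x : ℝ => (x / 2 - α) ^ 2 + 2 * x * r)
        ((v / 2 - α) + 2 * r) v := by
      have h2 : HasDerivAt (fun x : ℝ => 2 * x * r) (2 * r) v := by
        simpa using ((hasDerivAt_id v).const_mul 2).mul_const r
      have := (h1.pow 2).add h2
      exact this.congr_deriv (by norm_num; ring)
    have hqv : (v / 2 - α) ^ 2 + 2 * v * r ≠ 0 := hΔ.ne'
    have hsq : HasDerivAt (fun x : ℝ => Real.sqrt ((x / 2 - α) ^ 2 + 2 * x * r))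
        (((v / 2 - α) + 2 * r) / (2 * s)) v := hq.sqrt hqv
    have hnum : HasDerivAt (fun x : ℝ => (x / 2 - α) + Real.sqrt ((x / 2 - α) ^ 2 + 2 * x * r))
        (1 / 2 + ((v / 2 - α) + 2 * r) / (2 * s)) v := h1.add hsq
    have hdiv := hnum.div (hasDerivAt_id v) hv0
    have heq : ((1 / 2 + ((v / 2 - α) + 2 * r) / (2 * s)) * id v -
        ((v / 2 - α) + s) * 1) / (id v) ^ 2
        = 2 * (α * dTwo α r v - r) / (v ^ 2 * (dTwo α r v - dOne α r v)) := by
      rw [hdiff, hd2]; simp only [id]; field_simp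
      linear_combination (-4) * hs2
    rw [← heq]
    exact hdiv
  refine ⟨hderiv, hP, ?_, ?_, ?_, ?_⟩
  · rintro ⟨h0, h1⟩
    apply div_pos _ hden
    rw [hP]
    have := mul_pos h0 (sub_pos.mpr h1)
    nlinarith
  · intro h
    have : 2 * (α * dTwo α r v - r) = 0 := by
      rw [hP]; rcases h with h | h <;> rw [h] <;> ring
    rw [this, zero_div]
  · intro h
    apply div_neg_of_neg_of_pos _ hden
    rw [hP]
    rcases h with h | h
    · have := mul_neg_of_neg_of_pos h (by linarith : (0:ℝ) < 1 - dTwo α r v)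
      nlinarith
    · have := mul_neg_of_pos_of_neg (by linarith : (0:ℝ) < dTwo α r v)
        (by linarith : 1 - dTwo α r v < 0)
      nlinarith
  · intro hr
    have hd2pos : 0 < dTwo α r v := by
      rw [hd2]
      apply div_pos _ hv
      nlinarith [hs2, hs0]
    refine ⟨?_, ?_, ?_⟩
    · intro hαr
      apply div_neg_of_neg_of_pos _ hden
      have hgt : 1 < dTwo α r v := by
        rw [hd2]
        rw [lt_div_iff₀ hv]
        nlinarith [hs2, hs0]
      rw [hP]
      have := mul_neg_of_pos_of_neg (by linarith : (0:ℝ) < dTwo α r v)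
        (by linarith : 1 - dTwo α r v < 0)
      nlinarith
    · intro hαr
      have hs' : s = v / 2 + α := by
        rw [hs, show (v / 2 - α) ^ 2 + 2 * v * r = (v / 2 + α) ^ 2 by rw [← hαr]; ring]
        exact Real.sqrt_sq (by linarith)
      have hone : dTwo α r v = 1 := by
        rw [hd2, hs', div_eq_one_iff_eq hv0]; ring
      have : 2 * (α * dTwo α r v - r) = 0 := by rw [hP, hone]; ring
      rw [this, zero_div]
    · intro hαr
      apply div_pos _ hden
      have hlt : dTwo α r v < 1 := by
        rw [hd2, div_lt_one hv]
        nlinarith [hs2, hs0]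
      rw [hP]
      have := mul_pos hd2pos (sub_pos.mpr hlt)
      nlinarith
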